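/- arXiv:2509.12576 — 6 statements merged into one kernel-verified Lean document; each statement's English description precedes it below -/
import Mathlib

section
/- Let R be a one-dimensional Noetherian local Cohen–Macaulay ring and I an ideal of R containing a regular element x. Then the colon ideal (xR :_R I) is a reflexive R-module (equivalently, a reflexive ideal). -/
open IsLocalRing

noncomputable def traceIdeal (R : Type*) [CommRing R] (M : Type*) [AddCommGroup M]
    [Module R M] : Ideal R :=
  ⨆ f : M →ₗ[R] R, LinearMap.range f

def IsCohenMacaulayLocalRing (R : Type*) [CommRing R] [IsLocalRing R] : Prop :=
  ∃ rs : List R, (∀ r ∈ rs, r ∈ maximalIdeal R) ∧ RingTheory.Sequence.IsRegular R rs ∧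
    ringKrullDim R = rs.length

noncomputable def moduleLength (R M : Type*) [CommRing R] [AddCommGroup M] [Module R M] :
    WithBot ℕ∞ :=
  Order.krullDim (Submodule R M)

noncomputable def conductorIdeal (R : Type*) [CommRing R] : Ideal R :=
  Submodule.colon (1 : Submodule R (FractionRing R))
    (Subalgebra.toSubmodule (integralClosure R (FractionRing R)))

def idealIntegralClosure {R : Type*} [CommRing R] (I : Ideal R) : Set R :=
  {x | ∃ n : ℕ, 0 < n ∧ ∃ a : ℕ → R, (∀ i ∈ Finset.Icc 1 n, a i ∈ I ^ i) ∧
    x ^ n + ∑ i ∈ Finset.Icc 1 n, a i * x ^ (n - i) = 0}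

def HasMinimalMultiplicity (R : Type*) [CommRing R] [IsLocalRing R] : Prop :=
  ∃ x : R, (x ∈ maximalIdeal R ∧
      ∃ n : ℕ, maximalIdeal R ^ (n + 1) = Ideal.span {x} * maximalIdeal R ^ n) ∧
    maximalIdeal R ^ 2 = Ideal.span {x} * maximalIdeal R

/-- Let `R` be a one-dimensional Noetherian local Cohen–Macaulay ring and `I`
an ideal of `R` containing a regular element `x`. Then the colon ideal `(xR :_R I)` is a
reflexive `R`-module. -/
theorem colon_isReflexive
    (R : Type*) [CommRing R] [IsNoetherianRing R] [IsLocalRing R]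
    (hdim : ringKrullDim R = 1) (hCM : IsCohenMacaulayLocalRing R)
    (I : Ideal R) (x : R) (hxI : x ∈ I) (hx : x ∈ nonZeroDivisors R) :
    Module.IsReflexive R ↥((Ideal.span {x}).colon I) := by
  set J := (Ideal.span {x}).colon I with hJdef
  have hcancel : ∀ a b : R, a * x = b * x → a = b := by
    intro a b h
    have h0 : (a - b) * x = 0 := by rw [sub_mul, h, sub_self]
    exact sub_eq_zero.mp ((mul_right_mem_nonZeroDivisors_eq_zero_iff hx).mp h0)
  have hxJ : x ∈ J := by
    refine Submodule.mem_colon.mpr fun i hi => ?_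
    exact Ideal.mem_span_singleton'.mpr ⟨i, by simp [smul_eq_mul, mul_comm]⟩
  have hmem : ∀ (j : ↥J) (i : R), i ∈ I → ∃ c, c * x = i * (j : R) := by
    intro j i hi
    have h2 := Submodule.mem_colon.mp j.2 i hi
    obtain ⟨c, hc⟩ := Ideal.mem_span_singleton'.mp h2
    exact ⟨c, by rw [hc, smul_eq_mul, mul_comm]⟩
  have key : ∀ i ∈ I, ∃ f : Module.Dual R ↥J, ∀ j : ↥J, f j * x = i * (j : R) := by
    intro i hi
    choose d hd using fun j => hmem j i hi
    refine ⟨{ toFun := d, map_add' := ?_, map_smul' := ?_ }, hd⟩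
    · intro a b
      apply hcancel
      rw [add_mul, hd, hd, hd]
      push_cast
      ring
    · intro r a
      apply hcancel
      simp only [RingHom.id_apply]
      rw [hd, smul_mul_assoc, hd]
      push_cast
      simp only [smul_eq_mul]
      ring
  constructor
  constructor
  · -- injectivity
    intro a b hab
    have := congrArg (fun g => g J.subtype) hab
    simpa using Subtype.ext this
  · -- surjectivity
    intro Φ
    set s : R := Φ J.subtype with hs
    have hsJ : s ∈ J := by
      refine Submodule.mem_colon.mpr fun i hi => ?_
      obtain ⟨f, hf⟩ := key i hi
      have hrel : i • J.subtype = x • f := by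
        ext j
        simp only [LinearMap.smul_apply, Submodule.coe_subtype, smul_eq_mul]
        rw [mul_comm x (f j), hf]
      refine Ideal.mem_span_singleton'.mpr ⟨Φ f, ?_⟩
      calc Φ f * x = x * Φ f := mul_comm _ _
        _ = Φ (x • f) := by rw [map_smul]; rfl
        _ = Φ (i • J.subtype) := by rw [hrel]
        _ = i * s := by rw [map_smul]; rfl
        _ = s • i := by rw [smul_eq_mul, mul_comm]
    refine ⟨⟨s, hsJ⟩, ?_⟩
    ext f
    have heval : Module.Dual.eval R ↥J ⟨s, hsJ⟩ f = f ⟨s, hsJ⟩ := rfl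
    rw [heval]
    -- key relation : f ⟨x, hxJ⟩ • J.subtype = x • f
    have hrel : ∀ j : ↥J, f ⟨x, hxJ⟩ * (j : R) = x * f j := by
      intro j
      have h1 : (j : R) • (⟨x, hxJ⟩ : ↥J) = x • j := by
        ext
        simp [mul_comm]
      calc f ⟨x, hxJ⟩ * (j : R) = (j : R) • f ⟨x, hxJ⟩ := by rw [smul_eq_mul, mul_comm]
        _ = f ((j : R) • ⟨x, hxJ⟩) := (map_smul f _ _).symm
        _ = f (x • j) := by rw [h1]
        _ = x * f j := by rw [map_smul, smul_eq_mul]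
    -- Φ applied to the relation f ⟨x,hxJ⟩ • subtype = x • f
    have hrel2 : f ⟨x, hxJ⟩ • J.subtype = x • f := by
      ext j
      simp only [LinearMap.smul_apply, Submodule.coe_subtype, smul_eq_mul]
      exact hrel j
    have h3 : f ⟨x, hxJ⟩ * s = x * Φ f := by
      calc f ⟨x, hxJ⟩ * s = Φ (f ⟨x, hxJ⟩ • J.subtype) := by rw [map_smul]; rfl
        _ = Φ (x • f) := by rw [hrel2]
        _ = x * Φ f := by rw [map_smul]; rfl
    have h4 : x * f ⟨s, hsJ⟩ = f ⟨x, hxJ⟩ * s := by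
      have h5 : x • (⟨s, hsJ⟩ : ↥J) = s • (⟨x, hxJ⟩ : ↥J) := by
        ext
        simp [mul_comm]
      calc x * f ⟨s, hsJ⟩ = f (x • ⟨s, hsJ⟩) := by rw [map_smul, smul_eq_mul]
        _ = f (s • ⟨x, hxJ⟩) := by rw [h5]
        _ = s * f ⟨x, hxJ⟩ := by rw [map_smul, smul_eq_mul]
        _ = f ⟨x, hxJ⟩ * s := mul_comm _ _
    apply hcancel
    rw [mul_comm _ x, mul_comm _ x, h4, h3]
end

section
/- Let R be a commutative ring, S a ring extension of R contained in the total quotient ring Q of R (a birational extension). Then the conductor C_R(S) = R : S contains a regular element of R if and only if S is finitely generated as an R-module. -/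
open IsLocalRing

set_option synthInstance.maxHeartbeats 800000 in
/-- Let `R` be a commutative Noetherian ring and `S` a ring extension of `R`
contained in the total quotient ring `Q` of `R` (a birational extension). Then the conductor
`C_R(S) = R : S = {r ∈ R | rS ⊆ R}` contains a regular element of `R` if and only if `S` is
finitely generated as an `R`-module. -/
theorem conductor_regular_iff_finite
    (R : Type*) [CommRing R] [IsNoetherianRing R]
    (S : Subalgebra R (FractionRing R)) :
    (∃ r ∈ Submodule.colon (1 : Submodule R (FractionRing R)) (Subalgebra.toSubmodule S),
        r ∈ nonZeroDivisors R) ↔ Module.Finite R ↥S := by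
  constructor
  · rintro ⟨r, hrc, hr⟩
    have key : Module.Finite R (Subalgebra.toSubmodule S) := by
      rw [Module.Finite.iff_fg]
      set μ : FractionRing R →ₗ[R] FractionRing R := r • LinearMap.id with hμ
      have hinj : Function.Injective μ := by
        intro x y hxy
        simp only [hμ, LinearMap.smul_apply, LinearMap.id_apply] at hxy
        rw [Algebra.smul_def, Algebra.smul_def] at hxy
        exact (IsLocalization.map_units (FractionRing R) ⟨r, hr⟩).mul_left_cancel hxy
      have hle : (Subalgebra.toSubmodule S).map μ ≤ (1 : Submodule R (FractionRing R)) := by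
        rintro _ ⟨x, hx, rfl⟩
        exact Submodule.mem_colon.mp hrc x hx
      have hfg : ((Subalgebra.toSubmodule S).map μ).FG := by
        have hJ : (((Subalgebra.toSubmodule S).map μ).comap
            (Algebra.linearMap R (FractionRing R))).FG := IsNoetherian.noetherian _
        have h2 := hJ.map (Algebra.linearMap R (FractionRing R))
        rwa [Submodule.map_comap_eq, ← Submodule.one_eq_range, inf_eq_right.mpr hle] at h2
      exact Submodule.fg_of_fg_map_injective μ hinj hfg
    exact key
  · intro h
    have hfg : (Subalgebra.toSubmodule S).FG := Module.Finite.iff_fg.mp h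
    obtain ⟨T, hT⟩ := hfg
    obtain ⟨b, hb⟩ := IsLocalization.exist_integer_multiples_of_finset
      (nonZeroDivisors R) T
    refine ⟨(b : R), ?_, b.2⟩
    rw [Submodule.mem_colon]
    have hle : Subalgebra.toSubmodule S ≤
        Submodule.comap ((b : R) • (LinearMap.id : FractionRing R →ₗ[R] FractionRing R))
          (1 : Submodule R (FractionRing R)) := by
      rw [← hT, Submodule.span_le]
      intro x hx
      obtain ⟨y, hy⟩ := hb x hx
      simp only [Submodule.mem_comap, LinearMap.smul_apply, LinearMap.id_apply,
        Submodule.one_eq_range, LinearMap.mem_range]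
      exact ⟨y, by simpa [Algebra.linearMap_apply] using hy⟩
    intro p hp
    exact hle hp
end

section
/- Let (R,m,k) be a one-dimensional non-regular Cohen–Macaulay local ring with infinite residue field. Then R has minimal multiplicity if and only if there exists a minimal reduction x of m with (xR :_R m) = m. -/
open IsLocalRing

-- Lemma A: a minimal reduction is not in m²
lemma aux_not_mem_sq (R : Type*) [CommRing R] [IsNoetherianRing R] [IsLocalRing R]
    (hdim : ringKrullDim R = 1) {x : R} (hx : x ∈ maximalIdeal R)
    {n : ℕ} (hred : maximalIdeal R ^ (n + 1) = Ideal.span {x} * maximalIdeal R ^ n) :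
    x ∉ maximalIdeal R ^ 2 := by
  intro hx2
  have hle : maximalIdeal R ^ (n + 1) ≤ maximalIdeal R * maximalIdeal R ^ (n + 1) := by
    calc maximalIdeal R ^ (n + 1) = Ideal.span {x} * maximalIdeal R ^ n := hred
    _ ≤ maximalIdeal R ^ 2 * maximalIdeal R ^ n := by
        exact Ideal.mul_mono_left ((Ideal.span_singleton_le_iff_mem _).mpr hx2)
    _ = maximalIdeal R * (Ideal.span {x} * maximalIdeal R ^ n) := by
        rw [← hred]; ring
    _ = maximalIdeal R * maximalIdeal R ^ (n + 1) := by rw [hred]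
  have hbot : maximalIdeal R ^ (n + 1) = ⊥ := by
    refine Submodule.eq_bot_of_le_smul_of_le_jacobson_bot (maximalIdeal R) _
      (IsNoetherian.noetherian _) ?_ ?_
    · simpa [smul_eq_mul] using hle
    · exact (IsLocalRing.jacobson_eq_maximalIdeal ⊥ bot_ne_top).ge
  -- every prime equals the maximal ideal
  have hsub : Subsingleton (PrimeSpectrum R) := by
    constructor
    intro p q
    have h1 : ∀ p : PrimeSpectrum R, p.asIdeal = maximalIdeal R := by
      intro p
      refine le_antisymm (le_maximalIdeal p.isPrime.ne_top) ?_
      have : maximalIdeal R ^ (n + 1) ≤ p.asIdeal := hbot ▸ bot_le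
      exact p.isPrime.le_of_pow_le this
    ext1; rw [h1 p, h1 q]
  have : ringKrullDim R ≤ 0 := Order.krullDim_nonpos_of_subsingleton
  rw [hdim] at this
  exact absurd this (by norm_num)

/-- Let `(R, m, k)` be a one-dimensional non-regular Cohen–Macaulay local ring
with infinite residue field. Then `R` has minimal multiplicity (Sally: `m² = xm` for some
minimal reduction `x` of `m`) if and only if there is a minimal reduction `x` of `m` with
`(xR :_R m) = m`. -/
theorem minimalMultiplicity_iff_colon_eq_maximalIdeal
    (R : Type*) [CommRing R] [IsNoetherianRing R] [IsLocalRing R]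
    (hdim : ringKrullDim R = 1) (hCM : IsCohenMacaulayLocalRing R)
    (hnonreg : ¬ (maximalIdeal R).IsPrincipal) (hk : Infinite (ResidueField R)) :
    HasMinimalMultiplicity R ↔
      ∃ x : R, (x ∈ maximalIdeal R ∧
          ∃ n : ℕ, maximalIdeal R ^ (n + 1) = Ideal.span {x} * maximalIdeal R ^ n) ∧
        (Ideal.span {x}).colon (maximalIdeal R) = maximalIdeal R := by
  constructor
  · rintro ⟨x, ⟨hx, hred⟩, hsq⟩
    refine ⟨x, ⟨hx, hred⟩, le_antisymm ?_ ?_⟩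
    · intro y hy
      by_contra hym
      have hu : IsUnit y := by
        by_contra h
        exact hym (h : y ∈ nonunits R)
      apply hnonreg
      refine ⟨x, le_antisymm ?_ ?_⟩
      · intro a ha
        have : y * a ∈ Ideal.span {x} := Submodule.mem_colon.mp hy a ha
        obtain ⟨u, hu'⟩ := hu
        have := Ideal.mul_mem_left _ (↑u⁻¹) this
        rwa [← hu', ← mul_assoc, Units.inv_mul, one_mul] at this
      · exact (Ideal.span_singleton_le_iff_mem _).mpr hx
    · intro y hy
      rw [Submodule.mem_colon]
      intro a ha
      have : a * y ∈ maximalIdeal R ^ 2 := by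
        rw [pow_two]; exact Ideal.mul_mem_mul ha hy
      rw [hsq] at this
      rw [smul_eq_mul, mul_comm]
      exact (Ideal.mul_le_left : Ideal.span {x} * maximalIdeal R ≤ Ideal.span {x}) this
  · rintro ⟨x, ⟨hx, n, hred⟩, hcolon⟩
    refine ⟨x, ⟨hx, n, hred⟩, le_antisymm ?_ ?_⟩
    · intro t ht
      have hm2 : maximalIdeal R ^ 2 ≤ Ideal.span {x} := by
        rw [pow_two]
        rw [Ideal.mul_le]
        intro a ha b hb
        have : b ∈ (Ideal.span {x}).colon (maximalIdeal R) := hcolon.ge hb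
        have := Submodule.mem_colon.mp this a ha
        simpa [mul_comm] using this
      obtain ⟨c, hc⟩ := Ideal.mem_span_singleton'.mp (hm2 ht)
      have hcm : c ∈ maximalIdeal R := by
        by_contra hcm
        have hu : IsUnit c := by
          by_contra h; exact hcm (h : c ∈ nonunits R)
        apply aux_not_mem_sq R hdim hx hred
        obtain ⟨u, hu'⟩ := hu
        have : (↑u⁻¹ : R) * t ∈ maximalIdeal R ^ 2 := Ideal.mul_mem_left _ _ ht
        rwa [← hc, ← hu', ← mul_assoc, Units.inv_mul, one_mul] at this
      rw [mul_comm (Ideal.span {x}) (maximalIdeal R), ← hc]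
      exact Ideal.mul_mem_mul hcm (Ideal.mem_span_singleton_self x)
    · calc Ideal.span {x} * maximalIdeal R ≤ maximalIdeal R * maximalIdeal R :=
          Ideal.mul_mono_left ((Ideal.span_singleton_le_iff_mem _).mpr hx)
      _ = maximalIdeal R ^ 2 := (pow_two _).symm
end

section
/- Let R be an analytically unramified one-dimensional non-regular Cohen–Macaulay local ring with infinite residue field, having minimal multiplicity. If I is a proper regular trace ideal with integral closure \bar{I} = m, then I = m; in particular I is reflexive. -/
open IsLocalRing

/-- Division by a nonzerodivisor gives a linear map. -/
lemma aux_divMap {R : Type*} [CommRing R] (x : R) (hx : x ∈ nonZeroDivisors R)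
    (N : Ideal R) (c : R) (h : ∀ t ∈ N, c * t ∈ Ideal.span {x}) :
    ∃ f : N →ₗ[R] R, ∀ t : N, x * f t = c * (t : R) := by
  choose v hv using fun t : N => Ideal.mem_span_singleton'.mp (h t t.2)
  refine ⟨⟨⟨fun t => v t, fun a b => ?_⟩, fun r a => ?_⟩, fun t => (mul_comm x _).trans (hv t)⟩
  · have : (v (a + b)) * x = (v a + v b) * x := by
      rw [hv, add_mul, hv, hv]; push_cast [mul_add]; ring
    exact mul_cancel_right_mem_nonZeroDivisors hx |>.mp this
  · have : (v (r • a)) * x = (r • v a) * x := by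
      calc v (r • a) * x = c * ↑(r • a) := hv _
        _ = r * (c * ↑a) := by push_cast [smul_eq_mul]; ring
        _ = r * (v a * x) := by rw [hv]
        _ = (r • v a) * x := by rw [smul_eq_mul]; ring
    exact mul_cancel_right_mem_nonZeroDivisors hx |>.mp this

lemma aux_reflexive (R : Type*) [CommRing R] [IsLocalRing R] (x : R)
    (hx : x ∈ nonZeroDivisors R) (hxm : x ∈ maximalIdeal R)
    (hsq : ∀ t ∈ maximalIdeal R, ∀ s ∈ maximalIdeal R, t * s ∈ Ideal.span {x})
    (hnp : ¬ (maximalIdeal R).IsPrincipal) :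
    Module.IsReflexive R ↥(maximalIdeal R) := by
  set m := maximalIdeal R with hm
  set ι := m.subtype with hι
  constructor
  constructor
  · intro a b hab
    have h := congrArg (fun ψ => ψ ι) hab
    simp only [Module.Dual.eval_apply] at h
    exact Subtype.ext h
  · intro φ
    set d := φ ι with hd
    -- key : for all c with c * m ⊆ (x), c * d ∈ (x)
    have key : ∀ c : R, (∀ s ∈ m, c * s ∈ Ideal.span {x}) → c * d ∈ Ideal.span {x} := by
      intro c hc
      obtain ⟨f, hf⟩ := aux_divMap x hx m c hc
      have hxf : x • f = c • ι := by
        ext s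
        simp only [LinearMap.smul_apply, smul_eq_mul, hf, hι, Submodule.coe_subtype]
      have : x * φ f = c * d := by
        rw [← smul_eq_mul, ← map_smul, hxf, map_smul, smul_eq_mul, hd]
      rw [← this]
      exact Ideal.mem_span_singleton'.mpr ⟨φ f, mul_comm _ _⟩
    have hdm : d ∈ m := by
      by_contra hdm
      have hdu : IsUnit d := by
        rw [hm] at hdm
        simpa [IsLocalRing.mem_maximalIdeal, mem_nonunits_iff, not_not] using hdm
      have hmx : m ≤ Ideal.span {x} := by
        intro t ht
        have := key t (fun s hs => hsq t ht s hs)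
        obtain ⟨u, hu⟩ := hdu
        have h2 : (↑u⁻¹ : R) * (t * d) ∈ Ideal.span {x} := Ideal.mul_mem_left _ _ this
        rwa [← hu, mul_comm t, ← mul_assoc, Units.inv_mul, one_mul] at h2
      exact hnp ⟨⟨x, le_antisymm hmx ((Ideal.span_singleton_le_iff_mem _).mpr hxm)⟩⟩
    refine ⟨⟨d, hdm⟩, ?_⟩
    ext f
    -- goal : f ⟨d, hdm⟩ = φ f
    set c := f ⟨x, hxm⟩ with hc
    have hxf : x • f = c • ι := by
      ext s
      have h1 : x • s = (s : R) • (⟨x, hxm⟩ : m) := by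
        ext; simp [mul_comm]
      simp only [LinearMap.smul_apply, smul_eq_mul, hι, Submodule.coe_subtype]
      rw [← smul_eq_mul, ← map_smul, h1, map_smul, smul_eq_mul, ← hc, mul_comm]
    have h2 : x * φ f = c * d := by
      rw [← smul_eq_mul, ← map_smul, hxf, map_smul, smul_eq_mul, hd]
    have h3 : x * f ⟨d, hdm⟩ = c * d := by
      have h1 : x • (⟨d, hdm⟩ : m) = d • (⟨x, hxm⟩ : m) := by
        ext; simp [mul_comm]
      rw [← smul_eq_mul, ← map_smul, h1, map_smul, smul_eq_mul, ← hc, mul_comm]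
    have := h3.trans h2.symm
    exact mul_cancel_left_mem_nonZeroDivisors hx |>.mp this

theorem main_part
    (R : Type*) [CommRing R] [IsNoetherianRing R] [IsLocalRing R]
    (hnonreg : ¬ (maximalIdeal R).IsPrincipal)
    (hmm : HasMinimalMultiplicity R)
    (I : Ideal R) (hproper : I ≠ ⊤) (hreg : ∃ x ∈ I, x ∈ nonZeroDivisors R)
    (htr : traceIdeal R ↥I = I)
    (hic : idealIntegralClosure I = ((maximalIdeal R : Ideal R) : Set R)) :
    I = maximalIdeal R ∧ Module.IsReflexive R ↥I := by
  obtain ⟨x, ⟨hxm, -⟩, hsq⟩ := hmm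
  obtain ⟨y, hyI, hynzd⟩ := hreg
  have hIm : I ≤ maximalIdeal R := IsLocalRing.le_maximalIdeal hproper
  -- products of two elements of m lie in (x)
  have hmmx : ∀ t ∈ maximalIdeal R, ∀ s ∈ maximalIdeal R, t * s ∈ Ideal.span {x} := by
    intro t ht s hs
    have h1 : t * s ∈ maximalIdeal R ^ 2 := by
      rw [pow_two]; exact Ideal.mul_mem_mul ht hs
    rw [hsq] at h1
    exact (Ideal.mul_le_inf.trans inf_le_left : Ideal.span {x} * maximalIdeal R ≤ Ideal.span {x}) h1
  -- x is a nonzerodivisor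
  have hxnzd : x ∈ nonZeroDivisors R := by
    refine mem_nonZeroDivisors_iff_right.mpr fun z hz => ?_
    obtain ⟨s, hs⟩ := Ideal.mem_span_singleton'.mp (hmmx y (hIm hyI) y (hIm hyI))
    have h1 : z * y * y = 0 := by
      rw [mul_assoc, ← hs, ← mul_assoc, mul_comm z s, mul_assoc, hz, mul_zero]
    exact mem_nonZeroDivisors_iff_right.mp hynzd z (mem_nonZeroDivisors_iff_right.mp hynzd (z * y) h1)
  -- m * I ⊆ x * I elementwise
  have hmI : ∀ c ∈ maximalIdeal R, ∀ u ∈ I, ∃ v ∈ I, x * v = c * u := by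
    intro c hc
    have hcspan : ∀ u ∈ I, c * u ∈ Ideal.span {x} := fun u hu => hmmx c hc u (hIm hu)
    obtain ⟨f, hf⟩ := aux_divMap x hxnzd I c hcspan
    intro u hu
    refine ⟨f ⟨u, hu⟩, ?_, hf ⟨u, hu⟩⟩
    have h1 : f ⟨u, hu⟩ ∈ traceIdeal R ↥I :=
      (le_iSup (fun g : I →ₗ[R] R => LinearMap.range g) f) (LinearMap.mem_range_self f _)
    rwa [htr] at h1
  have hmIle : maximalIdeal R * I ≤ Ideal.span {x} * I := by
    refine Ideal.mul_le.mpr fun c hc u hu => ?_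
    obtain ⟨v, hv, hxv⟩ := hmI c hc u hu
    rw [← hxv]
    exact Ideal.mul_mem_mul (Ideal.mem_span_singleton_self x) hv
  -- powers
  have hpow : ∀ i : ℕ, I ^ (i + 1) ≤ Ideal.span {x} ^ i * I := by
    intro i
    induction i with
    | zero => simp
    | succ i ih =>
      calc I ^ (i + 2) = I ^ (i + 1) * I := pow_succ I (i + 1)
        _ ≤ (Ideal.span {x} ^ i * I) * I := Ideal.mul_mono_left ih
        _ = Ideal.span {x} ^ i * (I * I) := mul_assoc _ _ _
        _ ≤ Ideal.span {x} ^ i * (maximalIdeal R * I) :=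
            Ideal.mul_mono_right (Ideal.mul_mono_left hIm)
        _ ≤ Ideal.span {x} ^ i * (Ideal.span {x} * I) := Ideal.mul_mono_right hmIle
        _ = Ideal.span {x} ^ (i + 1) * I := by rw [← mul_assoc, ← pow_succ]
  -- x is integral over I
  have hxicl : x ∈ idealIntegralClosure I := by
    have h1 : x ∈ ((maximalIdeal R : Ideal R) : Set R) := hxm
    rwa [← hic] at h1
  obtain ⟨n, hn, a, ha, heq⟩ := hxicl
  have hsum : (∑ i ∈ Finset.Icc 1 n, a i * x ^ (n - i)) ∈ Ideal.span {x} ^ (n - 1) * I := by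
    refine Submodule.sum_mem _ fun i hi => ?_
    obtain ⟨h1i, hin⟩ := Finset.mem_Icc.mp hi
    have hai : a i ∈ Ideal.span {x} ^ (i - 1) * I := by
      have h2 := hpow (i - 1)
      rw [Nat.sub_add_cancel h1i] at h2
      exact h2 (ha i hi)
    have h3 : a i * x ^ (n - i) ∈ (Ideal.span {x} ^ (i - 1) * I) * Ideal.span {x} ^ (n - i) :=
      Ideal.mul_mem_mul hai (Ideal.pow_mem_pow (Ideal.mem_span_singleton_self x) _)
    have harith : (i - 1) + (n - i) = n - 1 := by omega
    rwa [mul_comm (Ideal.span {x} ^ (i - 1)) I, mul_assoc, ← pow_add, harith,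
      mul_comm I] at h3
  rw [Ideal.span_singleton_pow] at hsum
  obtain ⟨b, hbI, hb⟩ := Ideal.mem_span_singleton_mul.mp hsum
  have hxI : x ∈ I := by
    have h0 : (x + b) * x ^ (n - 1) = 0 := by
      have hxn : x ^ n = x ^ (n - 1) * x := by rw [← pow_succ, Nat.sub_add_cancel hn]
      calc (x + b) * x ^ (n - 1)
          = x ^ n + x ^ (n - 1) * b := by rw [hxn]; ring
        _ = 0 := by rw [hb, heq]
    have h1 : x + b = 0 := mem_nonZeroDivisors_iff_right.mp (pow_mem hxnzd (n - 1)) (x + b) h0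
    have h2 : x = -b := eq_neg_of_add_eq_zero_left h1
    rw [h2]; exact I.neg_mem hbI
  have hmle : maximalIdeal R ≤ I := by
    intro t ht
    obtain ⟨v, hv, hxv⟩ := hmI t ht x hxI
    have h1 : x * v = x * t := by rw [hxv]; ring
    have h2 : v = t := (mul_cancel_left_mem_nonZeroDivisors hxnzd).mp h1
    rwa [← h2]
  have hIeq : I = maximalIdeal R := le_antisymm hIm hmle
  refine ⟨hIeq, ?_⟩
  rw [hIeq]
  exact aux_reflexive R x hxnzd hxm hmmx hnonreg

/-- Let `R` be an analytically unramified one-dimensional non-regular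
Cohen–Macaulay local ring with infinite residue field, having minimal multiplicity. If `I` is
a proper regular trace ideal with integral closure `Ī = m`, then `I = m`; in particular `I`
is reflexive. -/
theorem trace_with_integralClosure_maximalIdeal_eq
    (R : Type*) [CommRing R] [IsNoetherianRing R] [IsLocalRing R]
    (hur : IsReduced (AdicCompletion (maximalIdeal R) R))
    (hdim : ringKrullDim R = 1) (hCM : IsCohenMacaulayLocalRing R)
    (hnonreg : ¬ (maximalIdeal R).IsPrincipal) (hk : Infinite (ResidueField R))
    (hmm : HasMinimalMultiplicity R)
    (I : Ideal R) (hproper : I ≠ ⊤) (hreg : ∃ x ∈ I, x ∈ nonZeroDivisors R)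
    (htr : traceIdeal R ↥I = I)
    (hic : idealIntegralClosure I = ((maximalIdeal R : Ideal R) : Set R)) :
    I = maximalIdeal R ∧ Module.IsReflexive R ↥I :=
  main_part R hnonreg hmm I hproper hreg htr hic
end

section
/- In R = k[[t^7, t^8, t^9, t^{11}]], the ideal I = (t^8, t^9, t^{21}) is reflexive; indeed I equals the double dual (bidual) of the ideal J = (t^8, t^9), i.e., I = R : (R : J). -/
open HahnSeries

/-- The numerical semigroup generated by `7, 8, 9, 11`. -/
def valSG : AddSubmonoid ℕ := AddSubmonoid.closure {7, 8, 9, 11}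

theorem algebraMap_laurentSeries_eq_single {k : Type*} [Field k] (c : k) :
    (algebraMap k (LaurentSeries k)) c = HahnSeries.single 0 c := by
  rw [HahnSeries.algebraMap_apply']
  rw [show algebraMap k (PowerSeries k) c = PowerSeries.C c from rfl]
  rw [HahnSeries.ofPowerSeries_C, HahnSeries.C_apply]

/-- The numerical semigroup ring `R = k[[t⁷, t⁸, t⁹, t¹¹]]`, realized as the subalgebra of
the Laurent series field `k((t))` consisting of (power) series supported on the numerical
semigroup `⟨7, 8, 9, 11⟩`. -/
def NSR (k : Type*) [Field k] : Subalgebra k (LaurentSeries k) where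
  carrier := {x | ∀ n : ℤ, x.coeff n ≠ 0 → ∃ m ∈ valSG, (m : ℤ) = n}
  mul_mem' := by
    intro a b ha hb n hn
    rw [HahnSeries.coeff_mul] at hn
    obtain ⟨ij, hij, hne⟩ := Finset.exists_ne_zero_of_sum_ne_zero hn
    rw [Finset.mem_addAntidiagonal] at hij
    obtain ⟨m1, hm1, he1⟩ := ha ij.1 (fun h => hne (by rw [h, zero_mul]))
    obtain ⟨m2, hm2, he2⟩ := hb ij.2 (fun h => hne (by rw [h, mul_zero]))
    exact ⟨m1 + m2, add_mem hm1 hm2, by push_cast; rw [he1, he2]; exact hij.2.2⟩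
  one_mem' := by
    intro n hn
    rcases eq_or_ne n 0 with h | h
    · exact ⟨0, zero_mem _, by simp [h]⟩
    · exact absurd (by simpa using HahnSeries.coeff_single_of_ne (r := (1 : k)) h) hn
  add_mem' := by
    intro a b ha hb n hn
    rw [HahnSeries.coeff_add] at hn
    by_cases h : a.coeff n = 0
    · exact hb n (by intro hb0; exact hn (by rw [h, hb0, add_zero]))
    · exact ha n h
  zero_mem' := by intro n hn; simp at hn
  algebraMap_mem' := by
    intro c n hn
    rcases eq_or_ne n 0 with h | h
    · exact ⟨0, zero_mem _, by simp [h]⟩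
    · rw [algebraMap_laurentSeries_eq_single] at hn
      exact absurd (HahnSeries.coeff_single_of_ne h) hn

theorem single_mem_NSR {k : Type*} [Field k] {n : ℕ} (hn : n ∈ valSG) :
    (HahnSeries.single (n : ℤ) (1 : k) : LaurentSeries k) ∈ NSR k := by
  intro m hm
  rcases eq_or_ne m (n : ℤ) with h | h
  · exact ⟨n, hn, h.symm⟩
  · exact absurd (HahnSeries.coeff_single_of_ne h) hm

theorem mem_valSG_7 : (7 : ℕ) ∈ valSG := AddSubmonoid.subset_closure (by simp)
theorem mem_valSG_8 : (8 : ℕ) ∈ valSG := AddSubmonoid.subset_closure (by simp)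
theorem mem_valSG_9 : (9 : ℕ) ∈ valSG := AddSubmonoid.subset_closure (by simp)
theorem mem_valSG_11 : (11 : ℕ) ∈ valSG := AddSubmonoid.subset_closure (by simp)
theorem mem_valSG_21 : (21 : ℕ) ∈ valSG := by
  have := add_mem (add_mem mem_valSG_7 mem_valSG_7) mem_valSG_7
  norm_num at this ⊢; exact this

theorem tpow_mem {k : Type*} [Field k] {n : ℕ} (hn : n ∈ valSG) :
    (HahnSeries.single (1 : ℤ) (1 : k)) ^ n ∈ NSR k := by
  rw [HahnSeries.single_pow]
  simpa using single_mem_NSR hn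

/-- `t`, the uniformizer of `k[[t]] ⊆ k((t))`. -/
noncomputable def tE (k : Type*) [Field k] : LaurentSeries k := HahnSeries.single 1 1

theorem tE_pow_mem {k : Type*} [Field k] {n : ℕ} (hn : n ∈ valSG) : tE k ^ n ∈ NSR k :=
  tpow_mem hn


/-! ### Auxiliary lemmas -/

theorem mem_valSG_of_ge : ∀ n : ℕ, 14 ≤ n → n ∈ valSG := by
  intro n
  induction n using Nat.strong_induction_on with
  | _ n ih =>
    intro h
    by_cases h21 : n ≤ 20
    · interval_cases n
      · exact add_mem mem_valSG_7 mem_valSG_7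
      · exact add_mem mem_valSG_7 mem_valSG_8
      · exact add_mem mem_valSG_7 mem_valSG_9
      · exact add_mem mem_valSG_8 mem_valSG_9
      · exact add_mem mem_valSG_7 mem_valSG_11
      · exact add_mem mem_valSG_8 mem_valSG_11
      · exact add_mem mem_valSG_9 mem_valSG_11
    · rw [show n = (n - 7) + 7 from by omega]
      exact add_mem (ih (n - 7) (by omega) (by omega)) mem_valSG_7

theorem mem_valSG_iff (n : ℕ) :
    n ∈ valSG ↔ n = 0 ∨ n = 7 ∨ n = 8 ∨ n = 9 ∨ n = 11 ∨ 14 ≤ n := by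
  constructor
  · intro h
    induction h using AddSubmonoid.closure_induction with
    | mem x hx => simp only [Set.mem_insert_iff, Set.mem_singleton_iff] at hx; omega
    | zero => omega
    | add x y hx hy px py => omega
  · rintro (rfl | rfl | rfl | rfl | rfl | h)
    · exact zero_mem _
    · exact mem_valSG_7
    · exact mem_valSG_8
    · exact mem_valSG_9
    · exact mem_valSG_11
    · exact mem_valSG_of_ge n h

/-- The value semigroup, as a set of integers. -/
def SGZ : Set ℤ := {n | ∃ m ∈ valSG, (m : ℤ) = n}

theorem mem_SGZ_iff (n : ℤ) :
    n ∈ SGZ ↔ n = 0 ∨ n = 7 ∨ n = 8 ∨ n = 9 ∨ n = 11 ∨ 14 ≤ n := by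
  constructor
  · rintro ⟨m, hm, rfl⟩
    rw [mem_valSG_iff] at hm
    omega
  · intro h
    refine ⟨n.toNat, ?_, by omega⟩
    rw [mem_valSG_iff]
    omega

theorem mem_NSR_iff {k : Type*} [Field k] (x : LaurentSeries k) :
    x ∈ NSR k ↔ ∀ n : ℤ, x.coeff n ≠ 0 → n ∈ SGZ := Iff.rfl

theorem mem_one_iff {k : Type*} [Field k] (x : LaurentSeries k) :
    x ∈ (1 : Submodule (NSR k) (LaurentSeries k)) ↔ ∀ n : ℤ, x.coeff n ≠ 0 → n ∈ SGZ := by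
  rw [Submodule.mem_one]
  constructor
  · rintro ⟨y, rfl⟩
    exact y.2
  · intro h
    exact ⟨⟨x, h⟩, rfl⟩

/-- Restriction of a Laurent series to a set of exponents. -/
noncomputable def restr {k : Type*} [Field k] (x : LaurentSeries k) (S : Set ℤ) :
    LaurentSeries k :=
  ⟨S.indicator x.coeff, x.isPWO_support'.mono (by rw [Set.support_indicator]; exact Set.inter_subset_right)⟩

theorem restr_coeff {k : Type*} [Field k] (x : LaurentSeries k) (S : Set ℤ) (n : ℤ) :
    (restr x S).coeff n = S.indicator x.coeff n := rfl

theorem split_mem {k : Type*} [Field k] (x : LaurentSeries k) (S₁ S₂ : Set ℤ)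
    (h : ∀ n, x.coeff n ≠ 0 → n ∈ S₁ ∨ n ∈ S₂) :
    ∃ x₁ x₂ : LaurentSeries k, x = x₁ + x₂ ∧ (∀ n, x₁.coeff n ≠ 0 → n ∈ S₁) ∧
      (∀ n, x₂.coeff n ≠ 0 → n ∈ S₂) := by
  classical
  refine ⟨restr x S₁, x - restr x S₁, by ring, ?_, ?_⟩
  · intro n hn
    rw [restr_coeff] at hn
    by_contra hns
    exact hn (Set.indicator_of_notMem hns _)
  · intro n hn
    rw [HahnSeries.coeff_sub, restr_coeff] at hn
    by_cases hns : n ∈ S₁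
    · rw [Set.indicator_of_mem hns] at hn
      simp at hn
    · rw [Set.indicator_of_notMem hns, sub_zero] at hn
      exact (h n hn).resolve_left hns

theorem mem_span_single_iff {k : Type*} [Field k] (a : ℤ) (x : LaurentSeries k) :
    x ∈ Submodule.span (NSR k) {(HahnSeries.single a 1 : LaurentSeries k)} ↔
      ∀ n, x.coeff n ≠ 0 → n - a ∈ SGZ := by
  rw [Submodule.mem_span_singleton]
  constructor
  · rintro ⟨r, rfl⟩ n hn
    have hs : (r : LaurentSeries k) • (single a 1 : LaurentSeries k)
        = (r : LaurentSeries k) * single a 1 := rfl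
    have hc : ((r : LaurentSeries k) * single a 1).coeff n
        = (r : LaurentSeries k).coeff (n - a) := by
      rw [show n = (n - a) + a from by ring, HahnSeries.coeff_mul_single_add, mul_one]
      ring_nf
    have hn' : (r : LaurentSeries k).coeff (n - a) ≠ 0 := by
      rw [← hc]
      exact hn
    exact r.2 _ hn'
  · intro h
    have hr : x * (single (-a) 1 : LaurentSeries k) ∈ NSR k := by
      intro m hm
      have hc : (x * (single (-a) 1 : LaurentSeries k)).coeff m = x.coeff (m + a) := by
        rw [show m = (m + a) + (-a) from by ring, HahnSeries.coeff_mul_single_add, mul_one]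
        ring_nf
      rw [hc] at hm
      have := h _ hm
      simpa [SGZ] using this
    refine ⟨⟨_, hr⟩, ?_⟩
    show x * (single (-a) 1 : LaurentSeries k) * single a 1 = x
    rw [mul_assoc, HahnSeries.single_mul_single, one_mul, neg_add_cancel,
      HahnSeries.single_zero_one, mul_one]

theorem mem_span_pair_iff {k : Type*} [Field k] (a b : ℤ) (x : LaurentSeries k) :
    x ∈ Submodule.span (NSR k)
        {(HahnSeries.single a 1 : LaurentSeries k), HahnSeries.single b 1} ↔
      ∀ n, x.coeff n ≠ 0 → (n - a ∈ SGZ ∨ n - b ∈ SGZ) := by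
  rw [show ({single a 1, single b 1} : Set (LaurentSeries k))
      = {single a 1} ∪ {single b 1} from Set.insert_eq _ _,
    Submodule.span_union, Submodule.mem_sup]
  constructor
  · rintro ⟨y, hy, z, hz, rfl⟩ n hn
    rw [HahnSeries.coeff_add] at hn
    by_cases h0 : y.coeff n = 0
    · exact Or.inr ((mem_span_single_iff b z).1 hz n
        (fun hz0 => hn (by rw [h0, hz0, add_zero])))
    · exact Or.inl ((mem_span_single_iff a y).1 hy n h0)
  · intro h
    obtain ⟨x₁, x₂, rfl, h1, h2⟩ :=
      split_mem x {n | n - a ∈ SGZ} {n | n - b ∈ SGZ} h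
    exact ⟨x₁, (mem_span_single_iff a x₁).2 h1, x₂, (mem_span_single_iff b x₂).2 h2, rfl⟩

theorem mem_span_triple_iff {k : Type*} [Field k] (a b c : ℤ) (x : LaurentSeries k) :
    x ∈ Submodule.span (NSR k)
        {(HahnSeries.single a 1 : LaurentSeries k), HahnSeries.single b 1,
          HahnSeries.single c 1} ↔
      ∀ n, x.coeff n ≠ 0 → (n - a ∈ SGZ ∨ n - b ∈ SGZ ∨ n - c ∈ SGZ) := by
  rw [show ({single a 1, single b 1, single c 1} : Set (LaurentSeries k))
      = {single a 1} ∪ {single b 1, single c 1} from Set.insert_eq _ _,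
    Submodule.span_union, Submodule.mem_sup]
  constructor
  · rintro ⟨y, hy, z, hz, rfl⟩ n hn
    rw [HahnSeries.coeff_add] at hn
    by_cases h0 : y.coeff n = 0
    · exact Or.inr ((mem_span_pair_iff b c z).1 hz n
        (fun hz0 => hn (by rw [h0, hz0, add_zero])))
    · exact Or.inl ((mem_span_single_iff a y).1 hy n h0)
  · intro h
    obtain ⟨x₁, x₂, rfl, h1, h2⟩ :=
      split_mem x {n | n - a ∈ SGZ} {n | n - b ∈ SGZ ∨ n - c ∈ SGZ} h
    exact ⟨x₁, (mem_span_single_iff a x₁).2 h1, x₂, (mem_span_pair_iff b c x₂).2 h2, rfl⟩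

theorem mem_one_div_iff {k : Type*} [Field k] (I : Submodule (NSR k) (LaurentSeries k))
    (T : Set ℤ) (hI : ∀ y : LaurentSeries k, y ∈ I ↔ ∀ n, y.coeff n ≠ 0 → n ∈ T)
    (x : LaurentSeries k) :
    x ∈ 1 / I ↔ ∀ m, x.coeff m ≠ 0 → ∀ n ∈ T, m + n ∈ SGZ := by
  rw [Submodule.mem_div_iff_forall_mul_mem]
  constructor
  · intro h m hm n hn
    have h1 : (single n 1 : LaurentSeries k) ∈ I := (hI _).2 (by
      intro p hp
      rcases eq_or_ne p n with rfl | hne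
      · exact hn
      · exact absurd (HahnSeries.coeff_single_of_ne hne) hp)
    have h2 := (mem_one_iff _).1 (h _ h1)
    have h3 : (x * single n 1).coeff (m + n) = x.coeff m := by
      rw [HahnSeries.coeff_mul_single_add, mul_one]
    exact h2 _ (by rw [h3]; exact hm)
  · intro h y hy
    rw [mem_one_iff]
    intro p hp
    rw [HahnSeries.coeff_mul] at hp
    obtain ⟨ij, hij, hne⟩ := Finset.exists_ne_zero_of_sum_ne_zero hp
    rw [Finset.mem_addAntidiagonal] at hij
    have h1 := h ij.1 (fun h0 => hne (by rw [h0, zero_mul]))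
    have h2 := (hI y).1 hy ij.2 (fun h0 => hne (by rw [h0, mul_zero]))
    rw [← hij.2.2]
    exact h1 _ h2

theorem tE_pow_eq (k : Type*) [Field k] (n : ℕ) :
    tE k ^ n = (HahnSeries.single (n : ℤ) 1 : LaurentSeries k) := by
  rw [tE, HahnSeries.single_pow, one_pow, nsmul_eq_mul, mul_one]

/-! ### Arithmetic of the dual sets -/

theorem dual_SJ (m : ℤ) :
    (∀ n : ℤ, (n - 8 ∈ SGZ ∨ n - 9 ∈ SGZ) → m + n ∈ SGZ) ↔ (m = -1 ∨ m = 0 ∨ 6 ≤ m) := by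
  constructor
  · intro h
    have h8 := h 8 (Or.inl (by rw [mem_SGZ_iff]; omega))
    have h9 := h 9 (Or.inr (by rw [mem_SGZ_iff]; omega))
    rw [mem_SGZ_iff] at h8 h9
    omega
  · intro hm n hn
    rw [mem_SGZ_iff]
    rcases hn with hn | hn <;> rw [mem_SGZ_iff] at hn <;> omega

theorem dual_T (m : ℤ) :
    (∀ n : ℤ, (n = -1 ∨ n = 0 ∨ 6 ≤ n) → m + n ∈ SGZ) ↔ (m = 8 ∨ m = 9 ∨ 15 ≤ m) := by
  constructor
  · intro h
    have h1 := h (-1) (by omega)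
    have h2 := h 0 (by omega)
    rw [mem_SGZ_iff] at h1 h2
    omega
  · intro hm n hn
    rw [mem_SGZ_iff]
    omega

theorem SI_eq (n : ℤ) :
    (n - 8 ∈ SGZ ∨ n - 9 ∈ SGZ ∨ n - 21 ∈ SGZ) ↔ (n = 8 ∨ n = 9 ∨ 15 ≤ n) := by
  simp only [mem_SGZ_iff]
  omega

theorem dual_SI (m : ℤ) :
    (∀ n : ℤ, (n = 8 ∨ n = 9 ∨ 15 ≤ n) → m + n ∈ SGZ) ↔ (m = -1 ∨ m = 0 ∨ 6 ≤ m) := by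
  constructor
  · intro h
    have h8 := h 8 (by omega)
    have h9 := h 9 (by omega)
    rw [mem_SGZ_iff] at h8 h9
    omega
  · intro hm n hn
    rw [mem_SGZ_iff]
    omega

/-- In `R = k[[t⁷, t⁸, t⁹, t¹¹]]`, the ideal `I = (t⁸, t⁹, t²¹)` is
reflexive; indeed `I` equals the bidual `R : (R : J)` of the ideal `J = (t⁸, t⁹)`, where for
an `R`-submodule `L` of `k((t))` the colon `R : L = {α | αL ⊆ R}` is `1 / L`. -/
theorem nsr_ideal_reflexive_eq_bidual
    (k : Type*) [Field k] [Infinite k] :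
    Submodule.span ↥(NSR k) ({tE k ^ 8, tE k ^ 9, tE k ^ 21} : Set (LaurentSeries k)) =
        1 / (1 / Submodule.span ↥(NSR k) ({tE k ^ 8, tE k ^ 9} : Set (LaurentSeries k))) ∧
      Submodule.span ↥(NSR k) ({tE k ^ 8, tE k ^ 9, tE k ^ 21} : Set (LaurentSeries k)) =
        1 / (1 / Submodule.span ↥(NSR k)
          ({tE k ^ 8, tE k ^ 9, tE k ^ 21} : Set (LaurentSeries k))) := by
  have e8 : tE k ^ 8 = (HahnSeries.single (8 : ℤ) 1 : LaurentSeries k) := by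
    have := tE_pow_eq k 8; norm_num at this; exact this
  have e9 : tE k ^ 9 = (HahnSeries.single (9 : ℤ) 1 : LaurentSeries k) := by
    have := tE_pow_eq k 9; norm_num at this; exact this
  have e21 : tE k ^ 21 = (HahnSeries.single (21 : ℤ) 1 : LaurentSeries k) := by
    have := tE_pow_eq k 21; norm_num at this; exact this
  rw [e8, e9, e21]
  set J := Submodule.span (NSR k)
    ({HahnSeries.single (8 : ℤ) 1, HahnSeries.single (9 : ℤ) 1} : Set (LaurentSeries k)) with hJdef
  set I := Submodule.span (NSR k)
    ({HahnSeries.single (8 : ℤ) 1, HahnSeries.single (9 : ℤ) 1,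
      HahnSeries.single (21 : ℤ) 1} : Set (LaurentSeries k)) with hIdef
  have hI : ∀ x : LaurentSeries k, x ∈ I ↔ ∀ n, x.coeff n ≠ 0 → (n = 8 ∨ n = 9 ∨ 15 ≤ n) := by
    intro x
    rw [hIdef, mem_span_triple_iff]
    exact forall_congr' fun n => imp_congr_right fun _ => SI_eq n
  have hJ : ∀ x : LaurentSeries k, x ∈ J ↔
      ∀ n, x.coeff n ≠ 0 → (n - 8 ∈ SGZ ∨ n - 9 ∈ SGZ) := fun x => mem_span_pair_iff 8 9 x
  have hDJ : ∀ x : LaurentSeries k, x ∈ 1 / J ↔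
      ∀ m, x.coeff m ≠ 0 → (m = -1 ∨ m = 0 ∨ 6 ≤ m) := by
    intro x
    rw [mem_one_div_iff J {n | n - 8 ∈ SGZ ∨ n - 9 ∈ SGZ} hJ]
    exact forall_congr' fun m => imp_congr_right fun _ => dual_SJ m
  have hDDJ : ∀ x : LaurentSeries k, x ∈ 1 / (1 / J) ↔
      ∀ m, x.coeff m ≠ 0 → (m = 8 ∨ m = 9 ∨ 15 ≤ m) := by
    intro x
    rw [mem_one_div_iff (1 / J) {n | n = -1 ∨ n = 0 ∨ 6 ≤ n} hDJ]
    exact forall_congr' fun m => imp_congr_right fun _ => dual_T m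
  have hDI : ∀ x : LaurentSeries k, x ∈ 1 / I ↔
      ∀ m, x.coeff m ≠ 0 → (m = -1 ∨ m = 0 ∨ 6 ≤ m) := by
    intro x
    rw [mem_one_div_iff I {n | n = 8 ∨ n = 9 ∨ 15 ≤ n} hI]
    exact forall_congr' fun m => imp_congr_right fun _ => dual_SI m
  have hDDI : ∀ x : LaurentSeries k, x ∈ 1 / (1 / I) ↔
      ∀ m, x.coeff m ≠ 0 → (m = 8 ∨ m = 9 ∨ 15 ≤ m) := by
    intro x
    rw [mem_one_div_iff (1 / I) {n | n = -1 ∨ n = 0 ∨ 6 ≤ n} hDI]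
    exact forall_congr' fun m => imp_congr_right fun _ => dual_T m
  constructor
  · ext x
    rw [hI x, hDDJ x]
  · ext x
    rw [hI x, hDDI x]
end

section
/- Let R be a reduced local Cohen–Macaulay ring and M a finitely generated R-module whose trace ideal J = tr_R(M) is regular. Then J** = tr_R(End_R(J)); in particular, the reflexive hull (double dual) of a regular trace ideal is again a trace ideal. -/
open IsLocalRing

section Aux
variable {R : Type*} [CommRing R]

theorem range_le_traceIdeal {M : Type*} [AddCommGroup M] [Module R M] (f : M →ₗ[R] R) :
    LinearMap.range f ≤ traceIdeal R M :=
  le_iSup (fun g : M →ₗ[R] R => LinearMap.range g) f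

/-- mult-by-`x` map `T → R`, when `x * T ⊆ R`. -/
noncomputable def divMap {T : Submodule R (FractionRing R)} {x : FractionRing R}
    (h : ∀ y ∈ T, x * y ∈ (1 : Submodule R (FractionRing R))) : ↥T →ₗ[R] R where
  toFun s := (Submodule.mem_one.mp (h s s.2)).choose
  map_add' s t := by
    apply IsFractionRing.injective R (FractionRing R)
    rw [map_add,
        (Submodule.mem_one.mp (h _ (s + t).2)).choose_spec,
        (Submodule.mem_one.mp (h _ s.2)).choose_spec,
        (Submodule.mem_one.mp (h _ t.2)).choose_spec,
        Submodule.coe_add, mul_add]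
  map_smul' r s := by
    apply IsFractionRing.injective R (FractionRing R)
    show algebraMap R (FractionRing R) ((Submodule.mem_one.mp (h _ (r • s).2)).choose) =
      algebraMap R (FractionRing R) (r • (Submodule.mem_one.mp (h _ s.2)).choose)
    rw [(Submodule.mem_one.mp (h _ (r • s).2)).choose_spec, Submodule.coe_smul,
      smul_eq_mul, map_mul, (Submodule.mem_one.mp (h _ s.2)).choose_spec, Algebra.smul_def]
    ring

theorem divMap_spec {T : Submodule R (FractionRing R)} {x : FractionRing R}
    (h : ∀ y ∈ T, x * y ∈ (1 : Submodule R (FractionRing R))) (s : ↥T) :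
    algebraMap R (FractionRing R) (divMap h s) = x * ↑s :=
  (Submodule.mem_one.mp (h s s.2)).choose_spec


theorem map_traceIdeal_eq_one_div (T : Submodule R (FractionRing R))
    (h1 : (1 : FractionRing R) ∈ T)
    (hmul : ∀ x ∈ T, ∀ y ∈ T, x * y ∈ T) :
    Submodule.map (Algebra.linearMap R (FractionRing R)) (traceIdeal R ↥T) =
      (1 : Submodule R (FractionRing R)) / T := by
  apply le_antisymm
  · rintro _ ⟨t, ht, rfl⟩
    rw [Algebra.linearMap_apply, Submodule.mem_div_iff_forall_mul_mem]
    refine Submodule.iSup_induction' (p := fun f : ↥T →ₗ[R] R => LinearMap.range f)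
      (motive := fun t _ => ∀ y ∈ T, algebraMap R (FractionRing R) t * y ∈
        (1 : Submodule R (FractionRing R)))
      (fun f t ht => ?_) ?_ (fun a b _ _ pa pb => ?_) ht
    · obtain ⟨s, rfl⟩ := ht
      intro y hy
      obtain ⟨⟨a, b⟩, hab⟩ := IsLocalization.surj (nonZeroDivisors R) y
      set t' : ↥T := ⟨y * ↑s, hmul y hy ↑s s.2⟩ with ht'
      have key : a • s = (b : R) • t' := by
        apply Subtype.ext
        show a • (s : FractionRing R) = (b : R) • (t' : FractionRing R)
        rw [Algebra.smul_def, Algebra.smul_def, ← hab, ht']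
        ring
      have key2 : a * f s = (b : R) * f t' := by
        have := congrArg f key
        rwa [map_smul, map_smul, smul_eq_mul, smul_eq_mul] at this
      have hbu : IsUnit (algebraMap R (FractionRing R) (b : R)) :=
        IsLocalization.map_units (FractionRing R) b
      have : algebraMap R (FractionRing R) (f s) * y = algebraMap R (FractionRing R) (f t') := by
        apply hbu.mul_left_cancel
        calc algebraMap R (FractionRing R) (b : R) * (algebraMap R (FractionRing R) (f s) * y)
            = algebraMap R (FractionRing R) (f s) * (y * algebraMap R (FractionRing R) (b : R)) :=
              by ring
          _ = algebraMap R (FractionRing R) (f s) * algebraMap R (FractionRing R) a := by rw [hab]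
          _ = algebraMap R (FractionRing R) (a * f s) := by rw [map_mul]; ring
          _ = algebraMap R (FractionRing R) ((b : R) * f t') := by rw [key2]
          _ = algebraMap R (FractionRing R) (b : R) * algebraMap R (FractionRing R) (f t') := by
              rw [map_mul]
      rw [this]
      exact Submodule.mem_one.mpr ⟨f t', rfl⟩
    · intro y hy
      simp
    · intro y hy
      rw [map_add, add_mul]
      exact Submodule.add_mem _ (pa y hy) (pb y hy)
  · intro x hx
    have h : ∀ y ∈ T, x * y ∈ (1 : Submodule R (FractionRing R)) :=
      fun y hy => Submodule.mem_div_iff_forall_mul_mem.mp hx y hy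
    refine ⟨divMap h ⟨1, h1⟩, range_le_traceIdeal (divMap h) ⟨_, rfl⟩, ?_⟩
    rw [Algebra.linearMap_apply, divMap_spec]
    exact mul_one x

theorem traceIdeal_congr {M N : Type*} [AddCommGroup M] [Module R M]
    [AddCommGroup N] [Module R N] (e : M ≃ₗ[R] N) :
    traceIdeal R M = traceIdeal R N := by
  apply le_antisymm
  · refine iSup_le fun f => ?_
    rintro x ⟨m, rfl⟩
    exact range_le_traceIdeal (f ∘ₗ (e.symm : N →ₗ[R] M)) ⟨e m, by simp⟩
  · refine iSup_le fun f => ?_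
    rintro x ⟨n, rfl⟩
    exact range_le_traceIdeal (f ∘ₗ (e : M →ₗ[R] N)) ⟨e.symm n, by simp⟩

theorem apply_mem_traceIdeal {M : Type*} [AddCommGroup M] [Module R M]
    (g : ↥(traceIdeal R M) →ₗ[R] R) (m : R)
    (hm : m ∈ ⨆ f : M →ₗ[R] R, LinearMap.range f) : g ⟨m, hm⟩ ∈ traceIdeal R M := by
  refine Submodule.iSup_induction' (p := fun f : M →ₗ[R] R => LinearMap.range f)
      (motive := fun x hx => g ⟨x, hx⟩ ∈ traceIdeal R M)
      (fun f x hx => ?_) ?_ (fun x y hx hy px py => ?_) hm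
  · obtain ⟨m', rfl⟩ := hx
    have hf : ∀ m', f m' ∈ traceIdeal R M := fun m' => range_le_traceIdeal f ⟨m', rfl⟩
    have : g ⟨f m', _⟩ = (g ∘ₗ (f.codRestrict (traceIdeal R M) hf)) m' := rfl
    rw [this]
    exact range_le_traceIdeal _ ⟨m', rfl⟩
  · show g ⟨0, _⟩ ∈ traceIdeal R M
    rw [show (⟨0, _⟩ : ↥(traceIdeal R M)) = 0 from rfl, map_zero]
    exact (traceIdeal R M).zero_mem
  · show g ⟨x + y, _⟩ ∈ traceIdeal R M
    have : (⟨x + y, _⟩ : ↥(traceIdeal R M)) = ⟨x, hx⟩ + ⟨y, hy⟩ := rfl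
    rw [this, map_add]
    exact (traceIdeal R M).add_mem px py

theorem traceIdeal_idem {M : Type*} [AddCommGroup M] [Module R M] :
    traceIdeal R ↥(traceIdeal R M) = traceIdeal R M := by
  apply le_antisymm
  · refine iSup_le fun g => ?_
    rintro x ⟨⟨m, hm⟩, rfl⟩
    exact apply_mem_traceIdeal g m hm
  · intro x hx
    exact range_le_traceIdeal (Submodule.subtype (traceIdeal R M)) ⟨⟨x, hx⟩, rfl⟩


end Aux

section Main
variable {R : Type*} [CommRing R] {M : Type*} [AddCommGroup M] [Module R M]

theorem trace_prop (x : FractionRing R)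
    (h : ∀ y ∈ Submodule.map (Algebra.linearMap R (FractionRing R)) (traceIdeal R M),
      x * y ∈ (1 : Submodule R (FractionRing R)))
    {y : FractionRing R}
    (hy : y ∈ Submodule.map (Algebra.linearMap R (FractionRing R)) (traceIdeal R M)) :
    x * y ∈ Submodule.map (Algebra.linearMap R (FractionRing R)) (traceIdeal R M) := by
  obtain ⟨j, hj, rfl⟩ := hy
  have inj : Function.Injective ⇑(Algebra.linearMap R (FractionRing R)) :=
    IsFractionRing.injective R (FractionRing R)
  set e := Submodule.equivMapOfInjective (Algebra.linearMap R (FractionRing R)) inj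
    (traceIdeal R M) with he
  set g := (divMap h).comp (e : ↥(traceIdeal R M) →ₗ[R] _) with hg
  have hle : traceIdeal R ↥(traceIdeal R M) ≤ traceIdeal R M :=
    le_of_eq traceIdeal_idem
  have hmem : g ⟨j, hj⟩ ∈ traceIdeal R M :=
    hle (range_le_traceIdeal g ⟨_, rfl⟩)
  refine ⟨g ⟨j, hj⟩, hmem, ?_⟩
  show algebraMap R (FractionRing R) (g ⟨j, hj⟩) = x * (Algebra.linearMap R (FractionRing R)) j
  rw [hg, LinearMap.comp_apply, divMap_spec h]
  simp [he, Submodule.coe_equivMapOfInjective_apply]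


theorem end_smul_identity (e : Module.End R ↥(traceIdeal R M)) {j j' : R}
    (hj : j ∈ traceIdeal R M) (hj' : j' ∈ traceIdeal R M) :
    j * ↑(e ⟨j', hj'⟩) = j' * ↑(e ⟨j, hj⟩) := by
  have h1 : j • e ⟨j', hj'⟩ = j' • e ⟨j, hj⟩ := by
    rw [← map_smul, ← map_smul]
    congr 1
    exact Subtype.ext (by simp [smul_eq_mul, mul_comm])
  have h2 := congrArg (Subtype.val) h1
  simpa [smul_eq_mul] using h2

noncomputable def endEquiv {j0 : R} (hj0 : j0 ∈ traceIdeal R M)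
    (hnz : j0 ∈ nonZeroDivisors R) :
    Module.End R ↥(traceIdeal R M) ≃ₗ[R]
      ↥((1 : Submodule R (FractionRing R)) /
        Submodule.map (Algebra.linearMap R (FractionRing R)) (traceIdeal R M)) := by
  have inj : Function.Injective ⇑(algebraMap R (FractionRing R)) :=
    IsFractionRing.injective R (FractionRing R)
  have hu : IsUnit (algebraMap R (FractionRing R) j0) :=
    IsLocalization.map_units (FractionRing R) ⟨j0, hnz⟩
  set v : Module.End R ↥(traceIdeal R M) → FractionRing R :=
    fun e => ↑hu.unit⁻¹ * algebraMap R (FractionRing R) ↑(e ⟨j0, hj0⟩) with hv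
  have hval : ∀ (e : Module.End R ↥(traceIdeal R M)) {j : R} (hj : j ∈ traceIdeal R M),
      v e * algebraMap R (FractionRing R) j = algebraMap R (FractionRing R) ↑(e ⟨j, hj⟩) := by
    intro e j hj
    rw [hv, mul_assoc, ← map_mul, mul_comm (↑(e ⟨j0, hj0⟩) : R) j,
      end_smul_identity e hj hj0, map_mul, ← mul_assoc, IsUnit.val_inv_mul, one_mul]
  have hmem : ∀ e : Module.End R ↥(traceIdeal R M),
      v e ∈ (1 : Submodule R (FractionRing R)) /
        Submodule.map (Algebra.linearMap R (FractionRing R)) (traceIdeal R M) := by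
    intro e
    rw [Submodule.mem_div_iff_forall_mul_mem]
    rintro _ ⟨j, hj, rfl⟩
    rw [show (Algebra.linearMap R (FractionRing R)) j = algebraMap R (FractionRing R) j from rfl,
      hval e hj]
    exact Submodule.mem_one.mpr ⟨_, rfl⟩
  set L : Module.End R ↥(traceIdeal R M) →ₗ[R]
      ↥((1 : Submodule R (FractionRing R)) /
        Submodule.map (Algebra.linearMap R (FractionRing R)) (traceIdeal R M)) :=
    { toFun := fun e => ⟨v e, hmem e⟩
      map_add' := by
        intro e e'
        apply Subtype.ext
        show v (e + e') = v e + v e'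
        simp only [hv, LinearMap.add_apply, Submodule.coe_add, map_add, mul_add]
      map_smul' := by
        intro r e
        apply Subtype.ext
        show ↑hu.unit⁻¹ * algebraMap R (FractionRing R) ↑((r • e) ⟨j0, hj0⟩) = r • v e
        rw [LinearMap.smul_apply, Submodule.coe_smul, smul_eq_mul, map_mul,
          Algebra.smul_def, hv]
        ring } with hL
  refine LinearEquiv.ofBijective L ⟨?_, ?_⟩
  · intro e e' hee
    have hvv : v e = v e' := congrArg Subtype.val hee
    apply LinearMap.ext
    rintro ⟨j, hj⟩
    apply Subtype.ext
    apply inj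
    rw [← hval e hj, ← hval e' hj, hvv]
  · rintro ⟨x, hx⟩
    have h : ∀ y ∈ Submodule.map (Algebra.linearMap R (FractionRing R)) (traceIdeal R M),
        x * y ∈ (1 : Submodule R (FractionRing R)) :=
      fun y hy => Submodule.mem_div_iff_forall_mul_mem.mp hx y hy
    have hex : ∀ s : ↥(traceIdeal R M), ∃ r ∈ traceIdeal R M,
        algebraMap R (FractionRing R) r = x * algebraMap R (FractionRing R) ↑s := by
      intro s
      have hsmem : algebraMap R (FractionRing R) ↑s ∈
          Submodule.map (Algebra.linearMap R (FractionRing R)) (traceIdeal R M) :=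
        ⟨↑s, s.2, rfl⟩
      obtain ⟨r, hr, hr2⟩ := trace_prop x h hsmem
      exact ⟨r, hr, hr2⟩
    set e : Module.End R ↥(traceIdeal R M) :=
      { toFun := fun s => ⟨(hex s).choose, (hex s).choose_spec.1⟩
        map_add' := by
          intro s t
          apply Subtype.ext
          apply inj
          show algebraMap R (FractionRing R) (hex (s + t)).choose =
            algebraMap R (FractionRing R) ((hex s).choose + (hex t).choose)
          rw [(hex (s + t)).choose_spec.2, map_add, (hex s).choose_spec.2,
            (hex t).choose_spec.2, Submodule.coe_add, map_add, mul_add]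
        map_smul' := by
          intro r s
          apply Subtype.ext
          apply inj
          show algebraMap R (FractionRing R) (hex (r • s)).choose =
            algebraMap R (FractionRing R) (r • (hex s).choose)
          rw [(hex (r • s)).choose_spec.2, Algebra.smul_def, map_mul,
            (hex s).choose_spec.2, Submodule.coe_smul, Algebra.smul_def]
          simp only [Algebra.algebraMap_self_apply, map_mul]
          ring } with he
    refine ⟨e, Subtype.ext ?_⟩
    show v e = x
    apply hu.mul_left_cancel
    rw [mul_comm (algebraMap R (FractionRing R) j0) (v e), hval e hj0]
    show algebraMap R (FractionRing R) (hex ⟨j0, hj0⟩).choose = _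
    rw [(hex ⟨j0, hj0⟩).choose_spec.2]
    ring

end Main

set_option synthInstance.maxHeartbeats 800000 in
/-- Let `R` be a reduced local Cohen–Macaulay ring and `M` a finitely
generated `R`-module whose trace ideal `J = tr_R(M)` is regular. Then
`J** = tr_R(End_R(J))`, where `J** = R : (R : J)` is computed in the total quotient ring;
in particular, the reflexive hull of a regular trace ideal is again a trace ideal. -/
theorem double_dual_of_trace_eq_trace_of_endomorphisms
    (R : Type*) [CommRing R] [IsNoetherianRing R] [IsLocalRing R] [IsReduced R]
    (hCM : IsCohenMacaulayLocalRing R)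
    (M : Type*) [AddCommGroup M] [Module R M] [Module.Finite R M]
    (hreg : ∃ x ∈ traceIdeal R M, x ∈ nonZeroDivisors R) :
    (1 : Submodule R (FractionRing R)) /
        ((1 : Submodule R (FractionRing R)) /
          Submodule.map (Algebra.linearMap R (FractionRing R)) (traceIdeal R M)) =
      Submodule.map (Algebra.linearMap R (FractionRing R))
        (traceIdeal R (Module.End R ↥(traceIdeal R M))) ∧
    traceIdeal R ↥(traceIdeal R (Module.End R ↥(traceIdeal R M))) =
      traceIdeal R (Module.End R ↥(traceIdeal R M)) := by
  obtain ⟨j0, hj0, hnz⟩ := hreg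
  constructor
  · have h1 : (1 : FractionRing R) ∈ (1 : Submodule R (FractionRing R)) /
        Submodule.map (Algebra.linearMap R (FractionRing R)) (traceIdeal R M) := by
      rw [Submodule.mem_div_iff_forall_mul_mem]
      rintro _ ⟨j, hj, rfl⟩
      rw [one_mul]
      exact Submodule.mem_one.mpr ⟨j, rfl⟩
    have hmul : ∀ x ∈ (1 : Submodule R (FractionRing R)) /
        Submodule.map (Algebra.linearMap R (FractionRing R)) (traceIdeal R M),
        ∀ y ∈ (1 : Submodule R (FractionRing R)) /
        Submodule.map (Algebra.linearMap R (FractionRing R)) (traceIdeal R M),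
        x * y ∈ (1 : Submodule R (FractionRing R)) /
        Submodule.map (Algebra.linearMap R (FractionRing R)) (traceIdeal R M) := by
      intro x hx y hy
      rw [Submodule.mem_div_iff_forall_mul_mem]
      rintro _ ⟨j, hj, rfl⟩
      have hyj : y * (Algebra.linearMap R (FractionRing R)) j ∈
          Submodule.map (Algebra.linearMap R (FractionRing R)) (traceIdeal R M) :=
        trace_prop y (fun z hz => Submodule.mem_div_iff_forall_mul_mem.mp hy z hz) ⟨j, hj, rfl⟩
      rw [mul_assoc]
      exact Submodule.mem_div_iff_forall_mul_mem.mp hx _ hyj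
    have hcongr := traceIdeal_congr (endEquiv hj0 hnz)
    rw [hcongr]
    exact (map_traceIdeal_eq_one_div _ h1 hmul).symm
  · exact traceIdeal_idem
end
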